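/- Let (X, d_X) be a Ptolemaic metric space and let x_1, x_2, x_3, x_4 ∈ X. Then min(d_X(x_1,x_3), d_X(x_2,x_4)) ≤ √2 · max(d_X(x_1,x_2), d_X(x_2,x_3), d_X(x_3,x_4), d_X(x_4,x_1)). In particular, for a four-point subset X' with t_b(X') < t_d(X'), one has t_d(X') ≤ √2 · t_b(X'). -/
import Mathlib


/-- The largest distance from `x` to any point of `X`. -/
noncomputable def ptTd (X : Type*) [MetricSpace X] (x : X) : ℝ :=
  sSup (Set.range fun y => dist x y)

/-- The second largest distance (counted with multiplicity over points) from `x`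
to points of `X`. -/
noncomputable def ptTb (X : Type*) [MetricSpace X] (x : X) : ℝ :=
  sSup {r : ℝ | ∃ y z : X, y ≠ z ∧ r = min (dist x y) (dist x z)}

/-- `t_b(X) = max_{x ∈ X} t_b(x)`. -/
noncomputable def tbX (X : Type*) [MetricSpace X] : ℝ :=
  sSup (Set.range (ptTb X))

/-- `t_d(X) = min_{x ∈ X} t_d(x)`. -/
noncomputable def tdX (X : Type*) [MetricSpace X] : ℝ :=
  sInf (Set.range (ptTd X))

/-- In a Ptolemaic metric space, the smaller "diagonal" of any four points is at most
`√2` times the largest "side"; in particular every four-point subset `X'` with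
`t_b(X') < t_d(X')` satisfies `t_d(X') ≤ √2 · t_b(X')`. -/
lemma ptolemy_aux {Y : Type*} [MetricSpace Y]
    (hPt : ∀ a b c d : Y,
      dist a c * dist b d ≤ dist a b * dist c d + dist a d * dist b c)
    (x₁ x₂ x₃ x₄ : Y) :
    min (dist x₁ x₃) (dist x₂ x₄) ≤
      Real.sqrt 2 *
        max (max (dist x₁ x₂) (dist x₂ x₃)) (max (dist x₃ x₄) (dist x₄ x₁)) := by
  set M := max (max (dist x₁ x₂) (dist x₂ x₃)) (max (dist x₃ x₄) (dist x₄ x₁)) with hM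
  set m := min (dist x₁ x₃) (dist x₂ x₄) with hm
  have hM0 : (0:ℝ) ≤ M := le_trans dist_nonneg (le_trans (le_max_left _ _) (le_max_left _ _))
  have hm0 : (0:ℝ) ≤ m := le_min dist_nonneg dist_nonneg
  have h12 : dist x₁ x₂ ≤ M := le_trans (le_max_left _ _) (le_max_left _ _)
  have h23 : dist x₂ x₃ ≤ M := le_trans (le_max_right _ _) (le_max_left _ _)
  have h34 : dist x₃ x₄ ≤ M := le_trans (le_max_left _ _) (le_max_right _ _)
  have h41 : dist x₄ x₁ ≤ M := le_trans (le_max_right _ _) (le_max_right _ _)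
  have h14 : dist x₁ x₄ ≤ M := by rw [dist_comm]; exact h41
  have hpt := hPt x₁ x₂ x₃ x₄
  have hsq : m * m ≤ 2 * (M * M) := by
    have h1 : m ≤ dist x₁ x₃ := min_le_left _ _
    have h2 : m ≤ dist x₂ x₄ := min_le_right _ _
    nlinarith [dist_nonneg (x := x₁) (y := x₂), dist_nonneg (x := x₂) (y := x₃),
      dist_nonneg (x := x₃) (y := x₄), dist_nonneg (x := x₁) (y := x₄)]
  calc m = Real.sqrt (m * m) := (Real.sqrt_mul_self hm0).symm
    _ ≤ Real.sqrt (2 * (M * M)) := Real.sqrt_le_sqrt hsq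
    _ = Real.sqrt 2 * M := by
        rw [Real.sqrt_mul (by norm_num), Real.sqrt_mul_self hM0]

theorem ptolemaic_persistence_bound {X : Type*} [MetricSpace X]
    (hPt : ∀ a b c d : X,
      dist a c * dist b d ≤ dist a b * dist c d + dist a d * dist b c) :
    (∀ x₁ x₂ x₃ x₄ : X,
      min (dist x₁ x₃) (dist x₂ x₄) ≤
        Real.sqrt 2 *
          max (max (dist x₁ x₂) (dist x₂ x₃)) (max (dist x₃ x₄) (dist x₄ x₁))) ∧
    (∀ s : Finset X, s.card = 4 → tbX ↥s < tdX ↥s →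
      tdX ↥s ≤ Real.sqrt 2 * tbX ↥s) := by
  refine ⟨ptolemy_aux hPt, ?_⟩
  intro s hcard hlt
  haveI : Fintype ↥s := FinsetCoe.fintype s
  have hc4 : Fintype.card ↥s = 4 := by rw [Fintype.card_coe]; exact hcard
  haveI : Nonempty ↥s := by
    rw [← Fintype.card_pos_iff, hc4]; norm_num
  have hPt' : ∀ a b c d : ↥s,
      dist a c * dist b d ≤ dist a b * dist c d + dist a d * dist b c := by
    intro a b c d
    simp only [Subtype.dist_eq]
    exact hPt a b c d
  -- ptTd facts
  have htd_le : ∀ x y : ↥s, dist x y ≤ ptTd ↥s x := fun x y =>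
    le_csSup (Set.finite_range _).bddAbove ⟨y, rfl⟩
  have htd_mem : ∀ x : ↥s, ∃ y, ptTd ↥s x = dist x y := by
    intro x
    have := (Set.range_nonempty (fun y : ↥s => dist x y)).csSup_mem
      (Set.finite_range _)
    obtain ⟨y, hy⟩ := this
    exact ⟨y, hy.symm⟩
  -- ptTb facts
  have hSfin : ∀ x : ↥s,
      {r : ℝ | ∃ y z : ↥s, y ≠ z ∧ r = min (dist x y) (dist x z)}.Finite := by
    intro x
    apply Set.Finite.subset
      (Set.finite_range fun p : ↥s × ↥s => min (dist x p.1) (dist x p.2))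
    rintro r ⟨y, z, -, rfl⟩
    exact ⟨(y, z), rfl⟩
  have htb_ge : ∀ x y z : ↥s, y ≠ z → min (dist x y) (dist x z) ≤ ptTb ↥s x := by
    intro x y z hyz
    exact le_csSup (hSfin x).bddAbove ⟨y, z, hyz, rfl⟩
  have htb_le_tb : ∀ x : ↥s, ptTb ↥s x ≤ tbX ↥s := fun x =>
    le_csSup (Set.finite_range _).bddAbove ⟨x, rfl⟩
  have htd_ge : ∀ x : ↥s, tdX ↥s ≤ ptTd ↥s x := fun x =>
    csInf_le (Set.finite_range _).bddBelow ⟨x, rfl⟩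
  have htb0 : 0 ≤ tbX ↥s := by
    obtain ⟨y, z, hyz⟩ := Fintype.exists_pair_of_one_lt_card (by omega : 1 < Fintype.card ↥s)
    have x0 : ↥s := Classical.arbitrary ↥s
    have h1 : (0:ℝ) ≤ min (dist x0 y) (dist x0 z) := le_min dist_nonneg dist_nonneg
    exact le_trans h1 (le_trans (htb_ge x0 y z hyz) (htb_le_tb x0))
  -- choose farthest points
  choose f hf using htd_mem
  have hdistf : ∀ x : ↥s, tbX ↥s < dist x (f x) := fun x =>
    lt_of_lt_of_le hlt (le_trans (htd_ge x) (hf x).le)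
  have hfne : ∀ x : ↥s, f x ≠ x := by
    intro x h
    have := hdistf x
    rw [h, dist_self] at this
    exact absurd this (not_lt.mpr htb0)
  -- Claim A: non-farthest distances are ≤ tbX
  have claimA : ∀ x y : ↥s, y ≠ f x → dist x y ≤ tbX ↥s := by
    intro x y hy
    have h1 : dist x y ≤ dist x (f x) := by
      rw [← hf x]; exact htd_le x y
    have h2 : min (dist x y) (dist x (f x)) ≤ ptTb ↥s x := htb_ge x y (f x) hy
    rw [min_eq_left h1] at h2
    exact le_trans h2 (htb_le_tb x)
  -- Claim B: f is an involution
  have claimB : ∀ x : ↥s, f (f x) = x := by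
    intro x
    by_contra h
    have := claimA (f x) x (fun h' => h h'.symm)
    rw [dist_comm] at this
    exact absurd (hdistf x) (not_lt.mpr this)
  -- set up the four points
  haveI : DecidableEq ↥s := Classical.decEq _
  set a : ↥s := Classical.arbitrary ↥s with ha
  set c : ↥s := f a with hc
  have hac : a ≠ c := fun h => hfne a h.symm
  have hcardac : ({a, c} : Finset ↥s).card = 2 := by
    rw [Finset.card_insert_of_notMem (by simpa using hac), Finset.card_singleton]
  have htcard : ((Finset.univ : Finset ↥s) \ {a, c}).card = 2 := by
    rw [Finset.card_sdiff_of_subset (Finset.subset_univ _), Finset.card_univ, hc4, hcardac]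
  obtain ⟨b, hb, d, hd, hbd⟩ := Finset.one_lt_card.mp (by omega : 1 < ((Finset.univ : Finset ↥s) \ {a, c}).card)
  have hb' : b ≠ a ∧ b ≠ c := by
    simp only [Finset.mem_sdiff, Finset.mem_insert, Finset.mem_singleton] at hb
    tauto
  have hd' : d ≠ a ∧ d ≠ c := by
    simp only [Finset.mem_sdiff, Finset.mem_insert, Finset.mem_singleton] at hd
    tauto
  have hteq : (Finset.univ : Finset ↥s) \ {a, c} = {b, d} := by
    refine (Finset.eq_of_subset_of_card_le ?_ ?_).symm
    · intro x hx
      simp only [Finset.mem_insert, Finset.mem_singleton] at hx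
      rcases hx with rfl | rfl
      · exact hb
      · exact hd
    · rw [htcard, Finset.card_insert_of_notMem (by simpa using hbd), Finset.card_singleton]
  -- f b = d
  have hfca : f c = a := by rw [hc]; exact claimB a
  have hfb_ne_a : f b ≠ a := by
    intro h
    have : f a = b := by rw [← h, claimB b]
    exact hb'.2 (by rw [← this, ← hc])
  have hfb_ne_c : f b ≠ c := by
    intro h
    have : f c = b := by rw [← h, claimB b]
    rw [hfca] at this
    exact hb'.1 this.symm
  have hfb_mem : f b ∈ ({b, d} : Finset ↥s) := by
    rw [← hteq]
    simp only [Finset.mem_sdiff, Finset.mem_univ, Finset.mem_insert, Finset.mem_singleton,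
      true_and]
    tauto
  have hfbd : f b = d := by
    simp only [Finset.mem_insert, Finset.mem_singleton] at hfb_mem
    rcases hfb_mem with h | h
    · exact absurd h (hfne b)
    · exact h
  have hfdb : f d = b := by rw [← hfbd, claimB b]
  -- diagonals ≥ tdX
  have hdiag : tdX ↥s ≤ min (dist a c) (dist b d) := by
    refine le_min ?_ ?_
    · exact le_trans (htd_ge a) (by rw [hf a, ← hc])
    · exact le_trans (htd_ge b) (by rw [hf b, hfbd])
  -- sides ≤ tbX
  have s_ab : dist a b ≤ tbX ↥s := claimA a b (by rw [← hc]; exact hb'.2)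
  have s_bc : dist b c ≤ tbX ↥s := claimA b c (by rw [hfbd]; exact hd'.2.symm)
  have s_cd : dist c d ≤ tbX ↥s := claimA c d (by rw [hfca]; exact hd'.1)
  have s_da : dist d a ≤ tbX ↥s := claimA d a (by rw [hfdb]; exact hb'.1.symm)
  -- conclude
  have key := ptolemy_aux hPt' a b c d
  have hmax : max (max (dist a b) (dist b c)) (max (dist c d) (dist d a)) ≤ tbX ↥s :=
    max_le (max_le s_ab s_bc) (max_le s_cd s_da)
  calc tdX ↥s ≤ min (dist a c) (dist b d) := hdiag
    _ ≤ Real.sqrt 2 * max (max (dist a b) (dist b c)) (max (dist c d) (dist d a)) := key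
    _ ≤ Real.sqrt 2 * tbX ↥s := by
        apply mul_le_mul_of_nonneg_left hmax (Real.sqrt_nonneg 2)
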